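/- For every real c ∈ [0, 1] and every real z ≥ 0, it holds that exp(c z) − c z − 1 ≤ c² (exp(z) − z − 1). -/

import Mathlib

private lemma exp_convex_aux (c x : ℝ) (hc0 : 0 ≤ c) (hc1 : c ≤ 1) :
    Real.exp (c * x) - 1 ≤ c * (Real.exp x - 1) := by
  have h := convexOn_exp.2 (Set.mem_univ (0 : ℝ)) (Set.mem_univ x)
    (by linarith : (0:ℝ) ≤ 1 - c) hc0 (by ring)
  simp only [smul_eq_mul, mul_zero, zero_add, Real.exp_zero, mul_one] at h
  nlinarith [h]

theorem stmt_13 (c z : ℝ) (hc0 : 0 ≤ c) (hc1 : c ≤ 1) (hz : 0 ≤ z) :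
    Real.exp (c * z) - c * z - 1 ≤ c ^ 2 * (Real.exp z - z - 1) := by
  set f : ℝ → ℝ := fun x => c ^ 2 * (Real.exp x - x - 1) - (Real.exp (c * x) - c * x - 1)
    with hf
  have hderiv : ∀ x : ℝ, HasDerivAt f (c ^ 2 * (Real.exp x - 1) - c * (Real.exp (c * x) - 1)) x := by
    intro x
    have h1 : HasDerivAt (fun x : ℝ => Real.exp (c * x)) (Real.exp (c * x) * (c * 1)) x :=
      ((hasDerivAt_id x).const_mul c).exp
    have h2 : HasDerivAt (fun x : ℝ => c ^ 2 * (Real.exp x - x - 1))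
        (c ^ 2 * (Real.exp x - 1)) x :=
      (((Real.hasDerivAt_exp x).sub (hasDerivAt_id x)).sub_const 1).const_mul (c ^ 2)
    have h3 : HasDerivAt (fun x : ℝ => Real.exp (c * x) - c * x - 1)
        (Real.exp (c * x) * (c * 1) - c * 1) x :=
      ((h1.sub ((hasDerivAt_id x).const_mul c)).sub_const 1)
    have := h2.sub h3
    convert this using 1
    · rfl
    · rfl
    · rfl
    · ring
  have hmono : MonotoneOn f (Set.Ici (0:ℝ)) := by
    apply monotoneOn_of_deriv_nonneg (convex_Ici 0)
    · exact (Continuous.continuousOn (by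
        have : Continuous f := by
          apply Continuous.sub
          · exact continuous_const.mul (((Real.continuous_exp).sub continuous_id).sub continuous_const)
          · exact ((Real.continuous_exp.comp (continuous_const.mul continuous_id)).sub
              (continuous_const.mul continuous_id)).sub continuous_const
        exact this))
    · intro x hx
      exact (hderiv x).differentiableAt.differentiableWithinAt
    · intro x hx
      rw [(hderiv x).deriv]
      have hx0 : 0 ≤ x := by
        simpa using interior_subset (s := Set.Ici (0:ℝ)) hx |>.out
      have key := exp_convex_aux c x hc0 hc1
      have hexp : 1 ≤ Real.exp x := by
        rw [show (1:ℝ) = Real.exp 0 by simp]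
        exact Real.exp_le_exp.2 hx0
      nlinarith [key, hexp, sq_nonneg c]
  have h0 : f 0 ≤ f z := by
    apply hmono (Set.self_mem_Ici) (Set.mem_Ici.2 hz) hz
  simp only [hf, mul_zero, Real.exp_zero] at h0
  nlinarith [h0]
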